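/- arXiv:math/0011143 — 5 statements merged into one kernel-verified Lean document; each statement's English description precedes it below -/
import Mathlib

section
/- Orthogonal approximate partial isometries are close to orthogonal exact partial isometries: given δ > 0 there exists ε > 0 such that for every n and all ε-approximate partial isometries v, w ∈ M_n(ℂ) with v*w = 0 and v w* = 0, there exist partial isometries v̂, ŵ ∈ M_n(ℂ) with v̂*ŵ = 0, v̂ ŵ* = 0, ‖v − v̂‖ ≤ δ and ‖w − ŵ‖ ≤ δ. -/
open scoped Matrix.Norms.L2Operator
open Matrix

noncomputable local instance (n : ℕ) : CStarAlgebra (Matrix (Fin n) (Fin n) ℂ) where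

/-- cutoff `q` so that `g t = t * q t` is `0` for `t ≤ 1/2` and `t⁻¹ᐟ²` for `t ≥ 3/4`. -/
noncomputable def q3 (t : ℝ) : ℝ := min 1 (max 0 (4*t-2)) / (Real.sqrt (max t (1/2)))^3

noncomputable def g3 (t : ℝ) : ℝ := t * q3 t

lemma sqrt_max_pos (t : ℝ) : 0 < Real.sqrt (max t (1/2)) :=
  Real.sqrt_pos.2 (lt_of_lt_of_le (by norm_num) (le_max_right _ _))

@[fun_prop]
lemma q3_cont : Continuous q3 := by
  apply Continuous.div
  · exact continuous_const.min (continuous_const.max (by fun_prop))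
  · fun_prop
  · exact fun t => pow_ne_zero _ (sqrt_max_pos t).ne'

@[fun_prop]
lemma g3_cont : Continuous g3 := continuous_id.mul q3_cont

lemma g3_low {t : ℝ} (ht : t ≤ 1/2) : g3 t = 0 := by
  unfold g3 q3
  rw [max_eq_left (by linarith), min_eq_right (by norm_num)]
  simp

lemma g3_high {t : ℝ} (ht : 3/4 ≤ t) : g3 t = 1 / Real.sqrt t := by
  have h0 : (0:ℝ) < t := by linarith
  have hs : 0 < Real.sqrt t := Real.sqrt_pos.2 h0
  have hsq : Real.sqrt t * Real.sqrt t = t := Real.mul_self_sqrt h0.le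
  have e1 : max t (1/2:ℝ) = t := max_eq_left (by linarith)
  have e2 : max (0:ℝ) (4*t-2) = 4*t-2 := max_eq_right (by linarith)
  have e3 : min (1:ℝ) (4*t-2) = 1 := min_eq_left (by linarith)
  have e4 : (Real.sqrt t)^3 = t * Real.sqrt t := by
    rw [pow_succ, sq, hsq]
  unfold g3 q3
  rw [e1, e2, e3, e4]
  field_simp

lemma dich {ε t : ℝ} (hε : 0 < ε) (hε8 : ε ≤ 1/8) (h : |t - t*t| ≤ ε) :
    |t| ≤ 2*ε ∨ |t-1| ≤ 2*ε := by
  rw [abs_le] at h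
  by_contra hc
  push_neg at hc
  obtain ⟨h1, h2⟩ := hc
  rw [lt_abs] at h1 h2
  rcases h1 with h1 | h1 <;> rcases h2 with h2 | h2
  · nlinarith
  · nlinarith [mul_pos (show (0:ℝ) < t - 2*ε by linarith)
      (show (0:ℝ) < 1 - t - 2*ε by linarith)]
  · linarith
  · nlinarith [mul_self_nonneg t]

lemma key {n : ℕ} (ε : ℝ) (hε0 : 0 < ε) (hε8 : ε ≤ 1/8)
    (v : Matrix (Fin n) (Fin n) ℂ)
    (hv : ‖vᴴ * v - (vᴴ * v) * (vᴴ * v)‖ ≤ ε) :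
    ∃ X Q : Matrix (Fin n) (Fin n) ℂ,
      Xᴴ = X ∧
      X = (vᴴ * v) * Q ∧ X = Q * (vᴴ * v) ∧
      ((v * X)ᴴ * (v * X)) * ((v * X)ᴴ * (v * X)) = (v * X)ᴴ * (v * X) ∧
      ‖v - v * X‖ ^ 2 ≤ 2 * ε := by
  set a := vᴴ * v with ha_def
  have ha : IsSelfAdjoint a := by
    rw [ha_def, ← star_eq_conjTranspose]; exact IsSelfAdjoint.star_mul_self v
  -- spectrum dichotomy
  have hsp : ∀ t ∈ spectrum ℝ a, |t| ≤ 2*ε ∨ |t-1| ≤ 2*ε := by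
    intro t ht
    refine dich hε0 hε8 ?_
    have hcfc : cfc (fun t : ℝ => t - t*t) a = a - a*a := by
      rw [cfc_sub (fun t : ℝ => t) (fun t : ℝ => t*t) a (by fun_prop) (by fun_prop),
        cfc_mul (fun t : ℝ => t) (fun t : ℝ => t) a (by fun_prop) (by fun_prop),
        cfc_id' ℝ a]
    have hle := norm_apply_le_norm_cfc (𝕜 := ℝ) (fun t : ℝ => t - t*t) a ht
      (by fun_prop) ha
    rw [hcfc] at hle
    calc |t - t*t| = ‖t - t*t‖ := (Real.norm_eq_abs _).symm
      _ ≤ ‖a - a*a‖ := hle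
      _ ≤ ε := hv
  have hlow : ∀ t ∈ spectrum ℝ a, |t| ≤ 2*ε → g3 t = 0 := by
    intro t _ h
    exact g3_low (by rw [abs_le] at h; linarith)
  have hhigh : ∀ t : ℝ, |t-1| ≤ 2*ε → 3/4 ≤ t := by
    intro t h; rw [abs_le] at h; linarith
  set X := cfc g3 a with hX_def
  set Q := cfc q3 a with hQ_def
  have hXsa : IsSelfAdjoint X := cfc_predicate g3 a
  have hXc : Xᴴ = X := by rw [← star_eq_conjTranspose]; exact hXsa
  have hXQ1 : X = a * Q := by
    rw [hX_def, hQ_def, show g3 = fun t => t * q3 t from rfl,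
      cfc_mul (fun t : ℝ => t) q3 a (by fun_prop) (by fun_prop), cfc_id' ℝ a]
  have hXQ2 : X = Q * a := by
    rw [hX_def, hQ_def, show (g3 : ℝ → ℝ) = fun t => t * q3 t from rfl]
    rw [cfc_congr (g := fun t => q3 t * t) (fun t _ => mul_comm t (q3 t)),
      cfc_mul q3 (fun t : ℝ => t) a (by fun_prop) (by fun_prop), cfc_id' ℝ a]
  refine ⟨X, Q, hXc, hXQ1, hXQ2, ?_, ?_⟩
  · -- idempotency
    have hXvX : (v * X)ᴴ * (v * X) = cfc (fun t => g3 t * t * g3 t) a := by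
      rw [conjTranspose_mul, hXc,
        cfc_mul (fun t => g3 t * t) g3 a (by fun_prop) (by fun_prop),
        cfc_mul g3 (fun t : ℝ => t) a (by fun_prop) (by fun_prop), cfc_id' ℝ a,
        ← hX_def, Matrix.mul_assoc X vᴴ (v * X), ← Matrix.mul_assoc vᴴ v X,
        ← ha_def, ← Matrix.mul_assoc X a X]
    rw [hXvX, ← cfc_mul (fun t => g3 t * t * g3 t) (fun t => g3 t * t * g3 t) a
      (by fun_prop) (by fun_prop)]
    apply cfc_congr
    intro t ht
    rcases hsp t ht with h | h
    · simp [hlow t ht h]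
    · have h34 := hhigh t h
      have h0 : (0:ℝ) < t := by linarith
      have hs : 0 < Real.sqrt t := Real.sqrt_pos.2 h0
      have hsq : Real.sqrt t * Real.sqrt t = t := Real.mul_self_sqrt h0.le
      have hone : (1 / Real.sqrt t) * t * (1 / Real.sqrt t) = 1 := by
        field_simp
        rw [sq, hsq]
      simp only [g3_high h34, hone, one_mul]
  · -- norm bound
    have hy : v - v * X = v * (1 - X) := by rw [Matrix.mul_sub, Matrix.mul_one]
    have h1X : (1 : Matrix (Fin n) (Fin n) ℂ) - X = cfc (fun t : ℝ => 1 - g3 t) a := by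
      rw [cfc_sub (fun _ : ℝ => (1:ℝ)) g3 a (by fun_prop) (by fun_prop),
        cfc_const_one ℝ a, hX_def]
    have h1Xsa : IsSelfAdjoint ((1 : Matrix (Fin n) (Fin n) ℂ) - X) := by
      rw [h1X]; exact cfc_predicate _ a
    have hprod : (v * (1 - X))ᴴ * (v * (1 - X))
        = cfc (fun t => (1 - g3 t) * t * (1 - g3 t)) a := by
      rw [conjTranspose_mul,
        show ((1 : Matrix (Fin n) (Fin n) ℂ) - X)ᴴ = 1 - X by
          rw [← star_eq_conjTranspose]; exact h1Xsa,
        cfc_mul (fun t => (1 - g3 t) * t) (fun t => 1 - g3 t) a (by fun_prop) (by fun_prop),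
        cfc_mul (fun t => (1 - g3 t)) (fun t : ℝ => t) a (by fun_prop) (by fun_prop),
        cfc_id' ℝ a, ← h1X,
        Matrix.mul_assoc (1 - X) vᴴ (v * (1 - X)), ← Matrix.mul_assoc vᴴ v (1 - X),
        ← ha_def, ← Matrix.mul_assoc (1 - X) a (1 - X)]
    have hk : ‖cfc (fun t => (1 - g3 t) * t * (1 - g3 t)) a‖ ≤ 2 * ε := by
      refine norm_cfc_le (by positivity) ?_
      intro t ht
      rcases hsp t ht with h | h
      · rw [hlow t ht h]
        simpa using h
      · have h34 := hhigh t h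
        have h0 : (0:ℝ) < t := by linarith
        have hs : 0 < Real.sqrt t := Real.sqrt_pos.2 h0
        have hsq : Real.sqrt t * Real.sqrt t = t := Real.mul_self_sqrt h0.le
        rw [g3_high h34]
        have he : (1 - 1 / Real.sqrt t) * t * (1 - 1 / Real.sqrt t)
            = (Real.sqrt t - 1)^2 := by
          calc (1 - 1 / Real.sqrt t) * t * (1 - 1 / Real.sqrt t)
              = (1 - 1 / Real.sqrt t) * (Real.sqrt t * Real.sqrt t)
                * (1 - 1 / Real.sqrt t) := by rw [hsq]
            _ = (Real.sqrt t - 1)^2 := by field_simp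
        rw [he, Real.norm_eq_abs, abs_of_nonneg (sq_nonneg _)]
        have ht1 : |t - 1| ≤ 2*ε := h
        rw [abs_le] at ht1
        nlinarith [sq_nonneg (Real.sqrt t - 1), sq_nonneg (Real.sqrt t + 1), hs, hsq]
    calc ‖v - v * X‖ ^ 2 = ‖v * (1 - X)‖ * ‖v * (1 - X)‖ := by rw [hy, sq]
      _ = ‖star (v * (1 - X)) * (v * (1 - X))‖ := (CStarRing.norm_star_mul_self).symm
      _ = ‖cfc (fun t => (1 - g3 t) * t * (1 - g3 t)) a‖ := by
          rw [Matrix.star_eq_conjTranspose, hprod]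
      _ ≤ 2 * ε := hk

/-- Orthogonal approximate partial isometries are close to
orthogonal exact partial isometries: given `δ > 0` there exists `ε > 0` such
that for all `ε`-approximate partial isometries `v, w ∈ Mₙ(ℂ)` with `v*w = 0`
and `v w* = 0`, there exist partial isometries `v̂, ŵ` with `v̂*ŵ = 0`,
`v̂ ŵ* = 0`, `‖v − v̂‖ ≤ δ` and `‖w − ŵ‖ ≤ δ`. -/
theorem stmt_3 (δ : ℝ) (hδ : 0 < δ) :
    ∃ ε : ℝ, 0 < ε ∧
      ∀ (n : ℕ) (v w : Matrix (Fin n) (Fin n) ℂ),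
        ‖vᴴ * v - (vᴴ * v) * (vᴴ * v)‖ ≤ ε →
        ‖wᴴ * w - (wᴴ * w) * (wᴴ * w)‖ ≤ ε →
        vᴴ * w = 0 → v * wᴴ = 0 →
        ∃ v' w' : Matrix (Fin n) (Fin n) ℂ,
          (v'ᴴ * v') * (v'ᴴ * v') = v'ᴴ * v' ∧
          (w'ᴴ * w') * (w'ᴴ * w') = w'ᴴ * w' ∧
          v'ᴴ * w' = 0 ∧ v' * w'ᴴ = 0 ∧
          ‖v - v'‖ ≤ δ ∧ ‖w - w'‖ ≤ δ := by
  refine ⟨min (1/8) (δ^2/2), by positivity, ?_⟩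
  intro n v w hvε hwε hvw hvw'
  have hε0 : (0:ℝ) < min (1/8) (δ^2/2) := by positivity
  have hε8 : min (1/8) (δ^2/2) ≤ 1/8 := min_le_left _ _
  have hεδ : min (1/8) (δ^2/2) ≤ δ^2/2 := min_le_right _ _
  obtain ⟨X, Q, hXc, hXQ1, hXQ2, hXidem, hXnorm⟩ := key _ hε0 hε8 v hvε
  obtain ⟨Y, R, hYc, hYQ1, hYQ2, hYidem, hYnorm⟩ := key _ hε0 hε8 w hwε
  have hab : (vᴴ * v) * (wᴴ * w) = 0 := by
    calc (vᴴ * v) * (wᴴ * w) = vᴴ * ((v * wᴴ) * w) := by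
          simp only [Matrix.mul_assoc]
      _ = 0 := by rw [hvw', Matrix.zero_mul, Matrix.mul_zero]
  refine ⟨v * X, w * Y, hXidem, hYidem, ?_, ?_, ?_, ?_⟩
  · rw [conjTranspose_mul, hXc, Matrix.mul_assoc X vᴴ (w * Y),
      ← Matrix.mul_assoc vᴴ w Y, hvw, Matrix.zero_mul, Matrix.mul_zero]
  · rw [conjTranspose_mul, hYc, hXQ2, hYQ1]
    calc v * (Q * (vᴴ * v)) * ((wᴴ * w) * R * wᴴ)
        = v * Q * ((vᴴ * v) * (wᴴ * w)) * (R * wᴴ) := by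
          simp only [Matrix.mul_assoc]
      _ = 0 := by rw [hab, Matrix.mul_zero, Matrix.zero_mul]
  · nlinarith [norm_nonneg (v - v * X), hXnorm, hδ]
  · nlinarith [norm_nonneg (w - w * Y), hYnorm, hδ]
end

section
/- For every η > 0 there exists ε > 0 such that: for every r ≥ 1, every block structure N = n₁ + ⋯ + n_r and every w ∈ M_N(ℂ), if there exist a partial isometry v ∈ M_N(ℂ) with ‖w − v‖ ≤ ε and a block diagonal projection P ∈ M_N(ℂ) with ‖w w* − P‖ ≤ ε, then there exists a partial isometry w̄ ∈ M_N(ℂ) such that w̄ w̄* is a block diagonal projection and ‖w − w̄‖ ≤ η. -/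
open scoped Matrix.Norms.L2Operator
open Matrix Pointwise

noncomputable instance matCStarAlg {ι : Type*} [Fintype ι] [DecidableEq ι] :
    CStarAlgebra (Matrix ι ι ℂ) where

section CStarLemmas

variable {A : Type*} [CStarAlgebra A]

lemma proj_norm_le_one {P : A} (h2 : P * P = P) (hs : star P = P) : ‖P‖ ≤ 1 := by
  have h1 : ‖P‖ * ‖P‖ = ‖P‖ := by
    calc ‖P‖ * ‖P‖ = ‖star P * P‖ := (CStarRing.norm_star_mul_self).symm
    _ = ‖P‖ := by rw [hs, h2]
  nlinarith [norm_nonneg P]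

lemma conj_cfc_eq {a u : A} (ha : IsSelfAdjoint a) (hu2 : u * u = 1) (hus : star u = u)
    (hcomm : u * a = a * u) (f : ℝ → ℝ) (hf : ContinuousOn f (spectrum ℝ a)) :
    u * cfc f a * u = cfc f a := by
  have hkey : ∀ x y : A, (u * x * u) * (u * y * u) = u * (x * y) * u := by
    intro x y
    simp only [mul_assoc]
    rw [← mul_assoc u u (y * u), hu2, one_mul]
  let ψ : C(spectrum ℝ a, ℝ) →⋆ₐ[ℝ] A :=
  { toFun := fun g => u * cfcHom ha g * u
    map_one' := by simp [hu2]
    map_mul' := fun g₁ g₂ => by simp only [_root_.map_mul]; rw [hkey]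
    map_zero' := by simp
    map_add' := fun g₁ g₂ => by simp [map_add, mul_add, add_mul]
    commutes' := fun r => by
      simp [Algebra.algebraMap_eq_smul_one, mul_smul_comm, smul_mul_assoc, hu2]
    map_star' := fun g => by
      show u * (cfcHom ha) (star g) * u = star (u * (cfcHom ha) g * u)
      rw [show ((cfcHom ha) (star g)) = star ((cfcHom ha) g) from map_star _ g]
      simp only [StarMul.star_mul, hus, star_star]
      simp [mul_assoc] }
  have hψc : Continuous ψ := by
    show Continuous fun g => u * cfcHom ha g * u
    exact (continuous_const.mul (cfcHom_continuous ha)).mul continuous_const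
  have hψid : ψ ((ContinuousMap.id ℝ).restrict (spectrum ℝ a)) = a := by
    show u * cfcHom ha _ * u = a
    rw [cfcHom_id ha, hcomm, mul_assoc, hu2, mul_one]
  have heq := cfcHom_eq_of_continuous_of_map_id ha ψ hψc hψid
  rw [cfc_apply f a ha hf]
  exact (DFunLike.congr_fun heq (⟨_, hf.restrict⟩ : C(spectrum ℝ a, ℝ))).symm

lemma spec_bound [Nontrivial A] {a : A} {ε : ℝ} (h : ‖a - 1‖ ≤ ε) {t : ℝ}
    (ht : t ∈ spectrum ℝ a) : |t - 1| ≤ ε := by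
  have h1 : spectrum ℝ a = ({1} : Set ℝ) + spectrum ℝ (a - 1) := by
    have := spectrum.singleton_add_eq (R := ℝ) (a - 1) 1
    rw [_root_.map_one, add_sub_cancel] at this
    exact this.symm
  rw [h1, Set.singleton_add] at ht
  obtain ⟨u, hu, rfl⟩ := ht
  simpa using (spectrum.norm_le_norm_of_mem hu).trans h

set_option maxHeartbeats 2000000 in
lemma key_cstar [Nontrivial A] {ε : ℝ} (hε0 : 0 < ε) (hε : ε ≤ 4⁻¹)
    {w v P : A} (hv : (star v * v) * (star v * v) = star v * v) (hwv : ‖w - v‖ ≤ ε)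
    (hP2 : P * P = P) (hPs : star P = P) (hwP : ‖w * star w - P‖ ≤ ε) :
    ∃ w' : A, (star w' * w') * (star w' * w') = star w' * w' ∧ w' * star w' = P ∧
      ‖w - w'‖ ≤ 10 * ε := by
  -- basic norm facts
  have hqs : star (star v * v) = star v * v := by
    simp [StarMul.star_mul, mul_assoc]
  have hvN : ‖v‖ ≤ 1 := by
    have h1 : ‖star v * v‖ ≤ 1 := proj_norm_le_one hv hqs
    have h2 : ‖star v * v‖ = ‖v‖ * ‖v‖ := CStarRing.norm_star_mul_self
    nlinarith [norm_nonneg v]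
  have hwN : ‖w‖ ≤ 1 + ε := by
    calc ‖w‖ = ‖(w - v) + v‖ := by rw [sub_add_cancel]
    _ ≤ ‖w - v‖ + ‖v‖ := norm_add_le _ _
    _ ≤ ε + 1 := add_le_add hwv hvN
    _ = 1 + ε := by ring
  have hPn : ‖P‖ ≤ 1 := proj_norm_le_one hP2 hPs
  have hQ2 : (1 - P) * (1 - P) = 1 - P := by
    have e : (1 - P) * (1 - P) = 1 - P - P + P * P := by noncomm_ring
    rw [hP2] at e; rw [e]; abel
  have hQs : star ((1:A) - P) = 1 - P := by simp [hPs]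
  have hQn : ‖(1:A) - P‖ ≤ 1 := proj_norm_le_one hQ2 hQs
  -- v is a genuine partial isometry
  have hzero : star (v * (star v * v) - v) * (v * (star v * v) - v) = 0 := by
    have e : star (v * (star v * v) - v) * (v * (star v * v) - v)
        = (star v * v) * ((star v * v) * (star v * v)) - (star v * v) * (star v * v)
          - (star v * v) * (star v * v) + (star v * v) := by
      simp only [star_sub, StarMul.star_mul, star_star]
      noncomm_ring
    rw [e, hv, hv]; abel
  have hvq : v * (star v * v) = v := by
    have h1 : ‖star (v * (star v * v) - v) * (v * (star v * v) - v)‖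
        = ‖v * (star v * v) - v‖ * ‖v * (star v * v) - v‖ := CStarRing.norm_star_mul_self
    rw [hzero, norm_zero] at h1
    have h0 : ‖v * (star v * v) - v‖ = 0 := by
      nlinarith [norm_nonneg (v * (star v * v) - v)]
    rw [norm_eq_zero, sub_eq_zero] at h0
    exact h0
  -- w is nearly a partial isometry
  have hwsw : ‖star w - star v‖ ≤ ε := by
    rw [← star_sub, norm_star]; exact hwv
  have e4 : ‖w * star w * w - w‖ ≤ ε * ((1+ε)*(1+ε)) + ε * (1+ε) + ε + ε := by
    have hid1 : w * star w * w - v * (star v * v)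
        = (w - v) * (star w * w) + v * ((star w - star v) * w) + (v * star v) * (w - v) := by
      noncomm_ring
    have hid2 : w * star w * w - w
        = ((w - v) * (star w * w) + v * ((star w - star v) * w) + (v * star v) * (w - v))
          + (v - w) := by
      rw [← hid1, hvq]; abel
    have t1 : ‖(w - v) * (star w * w)‖ ≤ ε * ((1+ε)*(1+ε)) := by
      have hsw : ‖star w * w‖ ≤ (1+ε)*(1+ε) := by
        calc ‖star w * w‖ ≤ ‖star w‖ * ‖w‖ := norm_mul_le _ _
        _ ≤ (1+ε)*(1+ε) := by
            rw [norm_star]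
            exact mul_le_mul hwN hwN (norm_nonneg _) (by positivity)
      calc ‖(w - v) * (star w * w)‖ ≤ ‖w - v‖ * ‖star w * w‖ := norm_mul_le _ _
      _ ≤ ε * ((1+ε)*(1+ε)) :=
          mul_le_mul hwv hsw (norm_nonneg _) (le_of_lt hε0)
    have t2 : ‖v * ((star w - star v) * w)‖ ≤ ε * (1+ε) := by
      calc ‖v * ((star w - star v) * w)‖ ≤ ‖v‖ * ‖(star w - star v) * w‖ := norm_mul_le _ _
      _ ≤ 1 * (ε * (1+ε)) := by
          have : ‖(star w - star v) * w‖ ≤ ε * (1+ε) := by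
            calc ‖(star w - star v) * w‖ ≤ ‖star w - star v‖ * ‖w‖ := norm_mul_le _ _
            _ ≤ ε * (1+ε) := mul_le_mul hwsw hwN (norm_nonneg _) (le_of_lt hε0)
          exact mul_le_mul hvN this (norm_nonneg _) zero_le_one
      _ = ε * (1+ε) := one_mul _
    have t3 : ‖(v * star v) * (w - v)‖ ≤ ε := by
      calc ‖(v * star v) * (w - v)‖ ≤ ‖v * star v‖ * ‖w - v‖ := norm_mul_le _ _
      _ ≤ 1 * ε := by
          have : ‖v * star v‖ ≤ 1 := by
            calc ‖v * star v‖ ≤ ‖v‖ * ‖star v‖ := norm_mul_le _ _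
            _ ≤ 1 := by rw [norm_star]; nlinarith [norm_nonneg v]
          exact mul_le_mul this hwv (norm_nonneg _) zero_le_one
      _ = ε := one_mul _
    have t4 : ‖v - w‖ ≤ ε := by rw [norm_sub_rev]; exact hwv
    calc ‖w * star w * w - w‖
        ≤ ‖(w - v) * (star w * w) + v * ((star w - star v) * w) + (v * star v) * (w - v)‖
          + ‖v - w‖ := by rw [hid2]; exact norm_add_le _ _
    _ ≤ (‖(w - v) * (star w * w)‖ + ‖v * ((star w - star v) * w)‖
          + ‖(v * star v) * (w - v)‖) + ‖v - w‖ := by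
        gcongr
        exact (norm_add_le _ _).trans (by gcongr; exact norm_add_le _ _)
    _ ≤ ε * ((1+ε)*(1+ε)) + ε * (1+ε) + ε + ε := by linarith
  -- x = P * w and its basic identities
  set x := P * w with hxdef
  have hPx : P * x = x := by rw [hxdef, ← mul_assoc, hP2]
  have h1Px : (1 - P) * x = 0 := by rw [sub_mul, one_mul, hPx, sub_self]
  have hsx : star x = star w * P := by rw [hxdef, StarMul.star_mul, hPs]
  have hsxP : star x * P = star x := by rw [hsx, mul_assoc, hP2]
  have hx1 : star x * (1 - P) = 0 := by rw [mul_sub, mul_one, hsxP, sub_self]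
  have hxN : ‖x‖ ≤ 1 + ε := by
    calc ‖x‖ ≤ ‖P‖ * ‖w‖ := norm_mul_le _ _
    _ ≤ 1 * (1 + ε) := mul_le_mul hPn hwN (norm_nonneg _) zero_le_one
    _ = 1 + ε := one_mul _
  have hwx : ‖w - x‖ ≤ (ε * ((1+ε)*(1+ε)) + ε * (1+ε) + ε + ε) + ε * (1+ε) := by
    have hidw : w - x = (1 - P) * (w - w * star w * w) + (1 - P) * ((w * star w - P) * w) := by
      have h' : (1 - P) * (w - w * star w * w) + (1 - P) * ((w * star w - P) * w)
          = w - P * w + (P * P - P) * w := by noncomm_ring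
      rw [hP2, sub_self, zero_mul, add_zero] at h'
      rw [hxdef, h']
    rw [hidw]
    have b1 : ‖(1 - P) * (w - w * star w * w)‖
        ≤ ε * ((1+ε)*(1+ε)) + ε * (1+ε) + ε + ε := by
      calc ‖(1 - P) * (w - w * star w * w)‖ ≤ ‖(1:A) - P‖ * ‖w - w * star w * w‖ :=
            norm_mul_le _ _
      _ ≤ 1 * (ε * ((1+ε)*(1+ε)) + ε * (1+ε) + ε + ε) := by
          have := e4
          rw [norm_sub_rev] at this
          exact mul_le_mul hQn this (norm_nonneg _) zero_le_one
      _ = _ := one_mul _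
    have b2 : ‖(1 - P) * ((w * star w - P) * w)‖ ≤ ε * (1+ε) := by
      calc ‖(1 - P) * ((w * star w - P) * w)‖ ≤ ‖(1:A) - P‖ * ‖(w * star w - P) * w‖ :=
            norm_mul_le _ _
      _ ≤ 1 * (ε * (1+ε)) := by
          have : ‖(w * star w - P) * w‖ ≤ ε * (1+ε) := by
            calc ‖(w * star w - P) * w‖ ≤ ‖w * star w - P‖ * ‖w‖ := norm_mul_le _ _
            _ ≤ ε * (1+ε) := mul_le_mul hwP hwN (norm_nonneg _) (le_of_lt hε0)
          exact mul_le_mul hQn this (norm_nonneg _) zero_le_one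
      _ = ε * (1+ε) := one_mul _
    exact (norm_add_le _ _).trans (add_le_add b1 b2)
  -- the positive element h
  set h : A := x * star x + (1 - P) with hhdef
  have hhs : IsSelfAdjoint h := by
    rw [_root_.IsSelfAdjoint, hhdef]
    simp [StarMul.star_mul, star_sub, hPs]
  have hxx1 : (x * star x) * (1 - P) = 0 := by rw [mul_assoc, hx1, mul_zero]
  have hxx1' : (1 - P) * (x * star x) = 0 := by rw [← mul_assoc, h1Px, zero_mul]
  have hhP : h * (1 - P) = 1 - P := by rw [hhdef, add_mul, hxx1, zero_add, hQ2]
  have hPh : (1 - P) * h = 1 - P := by rw [hhdef, mul_add, hxx1', zero_add, hQ2]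
  have l3 : P * (1 - P) = 0 := by rw [mul_sub, mul_one, hP2, sub_self]
  have l4 : (1 - P) * P = 0 := by rw [sub_mul, one_mul, hP2, sub_self]
  have hcommPh : P * h = h * P := by
    have l1 : P * (x * star x) = x * star x := by rw [← mul_assoc, hPx]
    have l2 : (x * star x) * P = x * star x := by rw [mul_assoc, hsxP]
    rw [hhdef, mul_add, add_mul, l1, l2, l3, l4]
  have hxxh : x * star x = h - (1 - P) := by rw [hhdef, add_sub_cancel_right]
  have hh1 : ‖h - 1‖ ≤ ε := by
    have e0 : h - 1 = x * star x - P := by rw [hhdef]; abel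
    have e1 : x * star x - P = P * ((w * star w - P) * P) := by
      have e2 : P * ((w * star w - P) * P) = (P * w) * (star w * P) - P * (P * P) := by
        noncomm_ring
      rw [hP2, hP2] at e2
      rw [e2, hxdef, hsx]
    rw [e0, e1]
    calc ‖P * ((w * star w - P) * P)‖ ≤ ‖P‖ * ‖(w * star w - P) * P‖ := norm_mul_le _ _
    _ ≤ 1 * (ε * 1) := by
        have : ‖(w * star w - P) * P‖ ≤ ε * 1 := by
          calc ‖(w * star w - P) * P‖ ≤ ‖w * star w - P‖ * ‖P‖ := norm_mul_le _ _
          _ ≤ ε * 1 := mul_le_mul hwP hPn (norm_nonneg _) (le_of_lt hε0)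
        exact mul_le_mul hPn this (norm_nonneg _) zero_le_one
    _ = ε := by ring
  -- spectrum of h
  have hspec : ∀ t ∈ spectrum ℝ h, |t - 1| ≤ ε := fun t ht => spec_bound hh1 ht
  have hspec' : ∀ t ∈ spectrum ℝ h, (3/4:ℝ) ≤ t := by
    intro t ht
    have h1 := abs_le.mp (hspec t ht)
    have : ε ≤ 4⁻¹ := hε
    linarith [h1.1]
  -- the inverse square root via cfc
  set f : ℝ → ℝ := fun t => (Real.sqrt (max t 2⁻¹))⁻¹ with hfdef
  have hfc : Continuous f := by
    apply Continuous.inv₀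
    · exact Real.continuous_sqrt.comp (continuous_id.max continuous_const)
    · intro t
      exact ne_of_gt (Real.sqrt_pos.mpr (lt_of_lt_of_le (by norm_num) (le_max_right t 2⁻¹)))
  set s := cfc f h with hsdef
  have hss : IsSelfAdjoint s := cfc_predicate f h
  have hsh : s * h = h * s := by
    have c := cfc_commute_cfc (R := ℝ) f id h
    rw [cfc_id ℝ h hhs] at c
    exact c.eq
  have K1 : s * s * h = 1 := by
    have m1 : cfc f h * cfc f h = cfc (fun t => f t * f t) h :=
      (cfc_mul f f h hfc.continuousOn hfc.continuousOn).symm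
    have m2 : cfc (fun t => f t * f t) h * h = cfc (fun t => (f t * f t) * t) h := by
      have m2' := (cfc_mul (fun t => f t * f t) id h ((hfc.mul hfc).continuousOn)
        continuous_id.continuousOn).symm
      rw [cfc_id ℝ h hhs] at m2'
      exact m2'
    have m3 : cfc (fun t => (f t * f t) * t) h = 1 := by
      have hone : cfc (fun _ : ℝ => (1:ℝ)) h = 1 := by
        rw [cfc_const 1 h hhs, _root_.map_one]
      rw [← hone]
      apply cfc_congr
      intro t ht
      have h34 := hspec' t ht
      have ht0 : (0:ℝ) < t := by linarith
      have hmax : max t 2⁻¹ = t := max_eq_left (by linarith)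
      simp only [hfdef, hmax]
      rw [← mul_inv, Real.mul_self_sqrt ht0.le, inv_mul_cancel₀ ht0.ne']
    rw [hsdef, m1, m2, m3]
  have K1' : h * (s * s) = 1 := by
    have e : s * s * h = h * (s * s) := by
      rw [mul_assoc, hsh, ← mul_assoc, hsh, mul_assoc]
    rw [← e, K1]
  -- s commutes with P
  have hu2 : (1 - P - P) * (1 - P - P) = 1 := by
    have e : (1 - P - P) * (1 - P - P)
        = 1 - (P + P + P + P) + (P*P + P*P + P*P + P*P) := by noncomm_ring
    rw [hP2] at e; rw [e]; abel
  have hus : star ((1:A) - P - P) = 1 - P - P := by simp [hPs]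
  have huh : (1 - P - P) * h = h * (1 - P - P) := by
    have a1 : (1 - P - P) * h = h - P * h - P * h := by noncomm_ring
    have a2 : h * (1 - P - P) = h - h * P - h * P := by noncomm_ring
    rw [a1, a2, hcommPh]
  have hconj : (1 - P - P) * s * (1 - P - P) = s := by
    rw [hsdef]
    exact conj_cfc_eq hhs hu2 hus huh f hfc.continuousOn
  have hsu : (1 - P - P) * s = s * (1 - P - P) := by
    calc (1 - P - P) * s = (1 - P - P) * s * ((1 - P - P) * (1 - P - P)) := by
          rw [hu2, mul_one]
    _ = ((1 - P - P) * s * (1 - P - P)) * (1 - P - P) := by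
          rw [mul_assoc ((1 - P - P) * s)]
    _ = s * (1 - P - P) := by rw [hconj]
  have hPs' : P * s = s * P := by
    have a1 : (1 - P - P) * s = s - P * s - P * s := by noncomm_ring
    have a2 : s * (1 - P - P) = s - s * P - s * P := by noncomm_ring
    have e3 : s - (P * s + P * s) = s - (s * P + s * P) := by
      rw [← sub_sub, ← sub_sub, ← a1, ← a2, hsu]
    have e4 : P * s + P * s = s * P + s * P := sub_right_injective e3
    have e5 : (2:ℝ) • (P * s - s * P) = 0 := by
      rw [two_smul]
      calc (P * s - s * P) + (P * s - s * P) = (P * s + P * s) - (s * P + s * P) := by abel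
      _ = 0 := by rw [e4, sub_self]
    have e6 : P * s - s * P = 0 := by
      have hn := norm_smul (2:ℝ) (P * s - s * P)
      rw [e5, norm_zero] at hn
      have : ‖P * s - s * P‖ = 0 := by
        rw [Real.norm_eq_abs] at hn
        have : |(2:ℝ)| = 2 := by norm_num
        rw [this] at hn
        linarith [norm_nonneg (P * s - s * P)]
      rwa [norm_eq_zero] at this
    exact sub_eq_zero.mp e6
  have hQs' : (1 - P) * s = s * (1 - P) := by
    rw [sub_mul, mul_sub, one_mul, mul_one, hPs']
  -- multiplicative facts for T = s * s
  have hTQ : (s * s) * (1 - P) = 1 - P := by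
    calc (s * s) * (1 - P) = (s * s) * (h * (1 - P)) := by rw [hhP]
    _ = ((s * s) * h) * (1 - P) := (mul_assoc _ _ _).symm
    _ = 1 - P := by rw [K1, one_mul]
  have hQT : (1 - P) * (s * s) = 1 - P := by
    calc (1 - P) * (s * s) = ((1 - P) * h) * (s * s) := by rw [hPh]
    _ = (1 - P) * (h * (s * s)) := mul_assoc _ _ _
    _ = 1 - P := by rw [K1', mul_one]
  -- main properties of w' = s * x
  have hA : (s * x) * star (s * x) = P := by
    rw [StarMul.star_mul, hss.star_eq]
    have e1 : s * x * (star x * s) = s * ((x * star x) * s) := by simp only [mul_assoc]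
    rw [e1, hxxh, sub_mul, mul_sub]
    have e2 : s * (h * s) = 1 := by rw [← mul_assoc, hsh, mul_assoc, K1']
    have e3 : s * ((1 - P) * s) = 1 - P := by
      rw [hQs', ← mul_assoc, hTQ]
    rw [e2, e3]
    exact sub_sub_cancel 1 P
  have hB : (star (s * x) * (s * x)) * (star (s * x) * (s * x)) = star (s * x) * (s * x) := by
    rw [StarMul.star_mul, hss.star_eq]
    have eT : (star x * s) * (s * x) = star x * ((s * s) * x) := by simp only [mul_assoc]
    rw [eT]
    have e5 : (star x * ((s * s) * x)) * (star x * ((s * s) * x))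
        = star x * ((s * s) * ((x * star x) * ((s * s) * x))) := by simp only [mul_assoc]
    rw [e5, hxxh, sub_mul]
    have e6 : h * ((s * s) * x) = x := by rw [← mul_assoc, K1', one_mul]
    have e7 : (1 - P) * ((s * s) * x) = 0 := by rw [← mul_assoc, hQT, h1Px]
    rw [e6, e7, sub_zero]
  -- norm estimate for 1 - s
  have hns : ‖(1:A) - s‖ ≤ 2 * ε := by
    have e8 : (1:A) - s = cfc (fun t => 1 - f t) h := by
      have := cfc_sub (fun _ : ℝ => (1:ℝ)) f h continuous_const.continuousOn hfc.continuousOn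
      rw [this, cfc_const 1 h hhs, _root_.map_one, hsdef]
    rw [e8]
    apply norm_cfc_le (by positivity)
    intro t ht
    have h34 := hspec' t ht
    have habs := hspec t ht
    have ht0 : (0:ℝ) < t := by linarith
    have hmax : max t 2⁻¹ = t := max_eq_left (by linarith)
    have hft : f t = (Real.sqrt t)⁻¹ := by rw [hfdef]; simp only [hmax]
    set r := Real.sqrt t with hrdef
    have hr0 : 0 < r := Real.sqrt_pos.mpr ht0
    have hr2 : r * r = t := Real.mul_self_sqrt ht0.le
    have hrh : 1/2 ≤ r := by nlinarith
    have hr1 : |r - 1| ≤ ε := by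
      have habs2 : |r - 1| * (r + 1) = |t - 1| := by
        rw [← abs_of_pos (show (0:ℝ) < r + 1 by linarith), ← abs_mul]
        congr 1
        linear_combination hr2
      nlinarith [abs_nonneg (r - 1)]
    rw [Real.norm_eq_abs, hft]
    have e9 : 1 - r⁻¹ = (r - 1) * r⁻¹ := by field_simp
    rw [e9, abs_mul, abs_inv, abs_of_pos hr0]
    have hrinv : r⁻¹ ≤ 2 := by
      rw [inv_le_comm₀ hr0 (by norm_num)]
      linarith
    calc |r - 1| * r⁻¹ ≤ ε * 2 := mul_le_mul hr1 hrinv (by positivity) (le_of_lt hε0)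
    _ = 2 * ε := by ring
  -- conclusion
  refine ⟨s * x, hB, hA, ?_⟩
  have split : ‖w - s * x‖ ≤ ‖w - x‖ + ‖x - s * x‖ := by
    have e10 : w - s * x = (w - x) + (x - s * x) := by abel
    rw [e10]; exact norm_add_le _ _
  have hxs : ‖x - s * x‖ ≤ 2 * ε * (1 + ε) := by
    have e11 : x - s * x = ((1:A) - s) * x := by rw [sub_mul, one_mul]
    rw [e11]
    calc ‖((1:A) - s) * x‖ ≤ ‖(1:A) - s‖ * ‖x‖ := norm_mul_le _ _
    _ ≤ 2 * ε * (1 + ε) := mul_le_mul hns hxN (norm_nonneg _) (by positivity)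
  have : ‖w - s * x‖ ≤ ((ε * ((1+ε)*(1+ε)) + ε * (1+ε) + ε + ε) + ε * (1+ε)) + 2 * ε * (1 + ε) :=
    split.trans (add_le_add hwx hxs)
  have hee : ε * ε ≤ ε * 4⁻¹ := mul_le_mul_of_nonneg_left hε (le_of_lt hε0)
  nlinarith [this, hee, hε0.le]
end CStarLemmas

/-- For every `η > 0` there exists `ε > 0` such that: for every
`r ≥ 1`, every block structure `N = n₁ + ⋯ + n_r` (blocks indexed by the sigma
type `(k : Fin r) × Fin (n k)`) and every `w ∈ M_N(ℂ)`, if there exist a partial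
isometry `v` with `‖w − v‖ ≤ ε` and a block diagonal projection `P` with
`‖w w* − P‖ ≤ ε`, then there is a partial isometry `w̄` such that `w̄ w̄*` is a
block diagonal projection and `‖w − w̄‖ ≤ η`. -/
theorem stmt_5 (η : ℝ) (hη : 0 < η) :
    ∃ ε : ℝ, 0 < ε ∧
      ∀ (r : ℕ), 1 ≤ r →
      ∀ (n : Fin r → ℕ)
        (w : Matrix ((k : Fin r) × Fin (n k)) ((k : Fin r) × Fin (n k)) ℂ),
        (∃ v : Matrix ((k : Fin r) × Fin (n k)) ((k : Fin r) × Fin (n k)) ℂ,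
          (vᴴ * v) * (vᴴ * v) = vᴴ * v ∧ ‖w - v‖ ≤ ε) →
        (∃ P : Matrix ((k : Fin r) × Fin (n k)) ((k : Fin r) × Fin (n k)) ℂ,
          P * P = P ∧ Pᴴ = P ∧
          (∀ i j : (k : Fin r) × Fin (n k), i.1 ≠ j.1 → P i j = 0) ∧
          ‖w * wᴴ - P‖ ≤ ε) →
        ∃ w' : Matrix ((k : Fin r) × Fin (n k)) ((k : Fin r) × Fin (n k)) ℂ,
          (w'ᴴ * w') * (w'ᴴ * w') = w'ᴴ * w' ∧
          (∀ i j : (k : Fin r) × Fin (n k), i.1 ≠ j.1 → (w' * w'ᴴ) i j = 0) ∧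
          ‖w - w'‖ ≤ η := by
  refine ⟨min (η / 10) 4⁻¹, by positivity, ?_⟩
  intro r hr n w hv' hP'
  obtain ⟨v, hv, hwv⟩ := hv'
  obtain ⟨P, hP2, hPs, hPblock, hwP⟩ := hP'
  by_cases hne : Nonempty ((k : Fin r) × Fin (n k))
  · haveI : Nontrivial (Matrix ((k : Fin r) × Fin (n k)) ((k : Fin r) × Fin (n k)) ℂ) := by
      obtain ⟨i⟩ := hne
      refine ⟨⟨0, 1, fun hc => ?_⟩⟩
      have h01 := congrFun (congrFun hc i) i
      simp [Matrix.one_apply] at h01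
    have hε0 : 0 < min (η / 10) 4⁻¹ := by positivity
    have hstar : ∀ M : Matrix ((k : Fin r) × Fin (n k)) ((k : Fin r) × Fin (n k)) ℂ,
        star M = Mᴴ := fun M => rfl
    obtain ⟨w', hB, hA, hnorm⟩ := key_cstar hε0 (min_le_right _ _)
      (w := w) (v := v) (P := P)
      (by rw [hstar]; exact hv) hwv hP2 (by rw [hstar]; exact hPs)
      (by rw [hstar]; exact hwP)
    refine ⟨w', by rw [← hstar]; exact hB, ?_, ?_⟩
    · intro i j hij
      rw [← hstar, hA]
      exact hPblock i j hij
    · calc ‖w - w'‖ ≤ 10 * min (η / 10) 4⁻¹ := hnorm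
      _ ≤ 10 * (η / 10) := by
          have := min_le_left (η / 10) (4⁻¹ : ℝ)
          linarith
      _ = η := by ring
  · haveI : IsEmpty ((k : Fin r) × Fin (n k)) := not_nonempty_iff.mp hne
    refine ⟨0, by simp, ?_, ?_⟩
    · intro i j _
      exact (IsEmpty.false i).elim
    · have hw0 : w = 0 := by
        ext i j
        exact (IsEmpty.false i).elim
      rw [hw0, sub_zero, norm_zero]
      exact hη.le
end

section
/- For every r ≥ 1 and η > 0 there exists ε > 0, depending only on r and η, such that: for every n and all chains of orthogonal projections 0 = P₀ < P₁ < ⋯ < P_r = I and 0 = Q₀ < Q₁ < ⋯ < Q_r = I in M_n(ℂ), with associated nest algebras A₁ = {a ∈ M_n(ℂ) : (I − P_i) a P_i = 0 for i = 1,…,r} and A₂ = {a ∈ M_n(ℂ) : (I − Q_i) a Q_i = 0 for i = 1,…,r}, if A₁ ⊆_ε A₂ then A₁ ∩ A₁* ⊆_η A₂ ∩ A₂*. -/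
open scoped Matrix.Norms.L2Operator
open Matrix

/-- The nest algebra in `Mₙ(ℂ)` associated to a chain of orthogonal projections
`P 0, P 1, …, P r`: all matrices `a` with `(1 - P i) * a * P i = 0` for each `i`. -/
def nestAlgebra {n r : ℕ} (P : Fin (r + 1) → Matrix (Fin n) (Fin n) ℂ) :
    Set (Matrix (Fin n) (Fin n) ℂ) :=
  {a | ∀ i : Fin (r + 1), (1 - P i) * a * P i = 0}

/-- A chain of orthogonal projections `0 = P₀ < P₁ < ⋯ < P_r = I` in `Mₙ(ℂ)`. -/
def IsProjChain {n r : ℕ} (P : Fin (r + 1) → Matrix (Fin n) (Fin n) ℂ) : Prop :=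
  (∀ i, P i * P i = P i ∧ (P i)ᴴ = P i) ∧
    P 0 = 0 ∧ P (Fin.last r) = 1 ∧
    (∀ i j : Fin (r + 1), i ≤ j → P i * P j = P i) ∧
    (∀ i j : Fin (r + 1), i < j → P i ≠ P j)

/-- For every `r ≥ 1` and `η > 0` there exists `ε > 0`,
depending only on `r` and `η`, such that: for every `n` and all chains of
orthogonal projections `0 = P₀ < P₁ < ⋯ < P_r = I` and `0 = Q₀ < Q₁ < ⋯ < Q_r = I`
in `Mₙ(ℂ)`, with associated nest algebras `A₁` and `A₂`, if `A₁ ⊆_ε A₂` then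
`A₁ ∩ A₁* ⊆_η A₂ ∩ A₂*`. -/
theorem stmt_8 (r : ℕ) (hr : 1 ≤ r) (η : ℝ) (hη : 0 < η) :
    ∃ ε : ℝ, 0 < ε ∧
      ∀ (n : ℕ) (P Q : Fin (r + 1) → Matrix (Fin n) (Fin n) ℂ),
        IsProjChain P → IsProjChain Q →
        (∀ a ∈ nestAlgebra P, ‖a‖ ≤ 1 → ∃ b ∈ nestAlgebra Q, ‖a - b‖ < ε) →
        ∀ a, a ∈ nestAlgebra P → aᴴ ∈ nestAlgebra P → ‖a‖ ≤ 1 →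
          ∃ b, b ∈ nestAlgebra Q ∧ bᴴ ∈ nestAlgebra Q ∧ ‖a - b‖ < η := by
  set ε : ℝ := η / ((r : ℝ) ^ 2 + 1) with hε
  have hεpos : 0 < ε := by positivity
  refine ⟨ε, hεpos, ?_⟩
  intro n P Q hP hQ hsub a haP haPs hnorm
  -- hermitian idempotents have norm at most 1
  have hproj : ∀ p : Matrix (Fin n) (Fin n) ℂ, p * p = p → pᴴ = p → ‖p‖ ≤ 1 := by
    intro p hp hps
    have h1 : ‖p‖ * ‖p‖ = ‖p‖ := by
      rw [← Matrix.l2_opNorm_conjTranspose_mul_self p, hps, hp]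
    nlinarith [norm_nonneg p]
  have hQproj : ∀ i, Q i * Q i = Q i := fun i => (hQ.1 i).1
  have hQherm : ∀ i, (Q i)ᴴ = Q i := fun i => (hQ.1 i).2
  have hQmono : ∀ i j : Fin (r + 1), i ≤ j → Q i * Q j = Q i := hQ.2.2.2.1
  -- key estimate: compressions of elements of A₁ by (1-Qᵢ) · Qᵢ are small
  have hkey : ∀ x : Matrix (Fin n) (Fin n) ℂ, x ∈ nestAlgebra P → ‖x‖ ≤ 1 →
      ∀ i : Fin (r + 1), ‖(1 - Q i) * x * Q i‖ ≤ ε := by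
    intro x hx hxn i
    obtain ⟨c, hc, hxc⟩ := hsub x hx hxn
    have hq1 : ‖Q i‖ ≤ 1 := hproj _ (hQproj i) (hQherm i)
    have hq1' : ‖1 - Q i‖ ≤ 1 := by
      refine hproj _ ?_ ?_
      · simp only [mul_sub, sub_mul, one_mul, mul_one, hQproj i]; abel
      · simp [hQherm i]
    have hexp : (1 - Q i) * (x - c) * Q i = (1 - Q i) * x * Q i - (1 - Q i) * c * Q i := by
      noncomm_ring
    have heq : (1 - Q i) * x * Q i = (1 - Q i) * (x - c) * Q i := by
      rw [hexp, hc i, sub_zero]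
    rw [heq]
    calc ‖(1 - Q i) * (x - c) * Q i‖ ≤ ‖(1 - Q i) * (x - c)‖ * ‖Q i‖ := norm_mul_le _ _
      _ ≤ ‖1 - Q i‖ * ‖x - c‖ * ‖Q i‖ := by
          gcongr
          exact norm_mul_le _ _
      _ ≤ 1 * ε * 1 := by
          have hxc' := le_of_lt hxc
          gcongr
      _ = ε := by ring
  -- the nest as an ℕ-indexed family
  set Q' : ℕ → Matrix (Fin n) (Fin n) ℂ := fun k => Q ⟨min k r, by omega⟩ with hQ'def
  have hQ'i : ∀ i : Fin (r + 1), Q' (i : ℕ) = Q i := by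
    intro i
    have h : (⟨min (i : ℕ) r, by omega⟩ : Fin (r + 1)) = i := by
      ext
      simp only []
      omega
    simp only [hQ'def]
    rw [h]
  have hQ'herm : ∀ k, (Q' k)ᴴ = Q' k := fun k => hQherm _
  have hQ'0 : Q' 0 = 0 := by
    have h : (⟨min 0 r, by omega⟩ : Fin (r + 1)) = 0 := by ext; simp
    simp only [hQ'def]
    rw [h, hQ.2.1]
  have hQ'r : ∀ k, r ≤ k → Q' k = 1 := by
    intro k hk
    have h : (⟨min k r, by omega⟩ : Fin (r + 1)) = Fin.last r := by
      ext; simp [Fin.last]; omega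
    simp only [hQ'def]
    rw [h, hQ.2.2.1]
  have hmul : ∀ j k : ℕ, Q' j * Q' k = Q' (min j k) := by
    have base : ∀ j k : ℕ, j ≤ k → Q' j * Q' k = Q' j := by
      intro j k h
      exact hQmono _ _ (by simp only [Fin.mk_le_mk]; omega)
    intro j k
    rcases le_total j k with h | h
    · rw [min_eq_left h]; exact base j k h
    · rw [min_eq_right h]
      have h2 := congrArg conjTranspose (base k j h)
      simp only [conjTranspose_mul, hQ'herm] at h2
      exact h2
  set Δ : ℕ → Matrix (Fin n) (Fin n) ℂ := fun k => Q' (k + 1) - Q' k with hΔdef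
  have hΔsum : ∑ k ∈ Finset.range r, Δ k = 1 := by
    rw [show (∑ k ∈ Finset.range r, Δ k) = ∑ k ∈ Finset.range r, (Q' (k+1) - Q' k) from rfl,
      Finset.sum_range_sub (fun k => Q' k), hQ'r r le_rfl, hQ'0, sub_zero]
  have hΔherm : ∀ k, (Δ k)ᴴ = Δ k := by
    intro k; simp [hΔdef, conjTranspose_sub, hQ'herm]
  have hΔidem : ∀ k, Δ k * Δ k = Δ k := by
    intro k
    simp only [hΔdef, mul_sub, sub_mul, hmul]
    rw [min_self, show min (k+1) k = k by omega, show min k (k+1) = k by omega, min_self]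
    abel
  have hΔn1 : ∀ k, ‖Δ k‖ ≤ 1 := fun k => hproj _ (hΔidem k) (hΔherm k)
  -- annihilation / absorption lemmas
  have hl : ∀ m k : ℕ, k < m → (1 - Q' m) * Δ k = 0 := by
    intro m k h
    simp only [hΔdef, sub_mul, one_mul, mul_sub, hmul]
    rw [show min m (k+1) = k + 1 by omega, show min m k = k by omega]
    abel
  have hrz : ∀ m k : ℕ, m ≤ k → Δ k * Q' m = 0 := by
    intro m k h
    simp only [hΔdef, sub_mul, hmul]
    rw [show min (k+1) m = m by omega, show min k m = m by omega]
    abel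
  have hQz : ∀ m k : ℕ, m ≤ k → Q' m * Δ k = 0 := by
    intro m k h
    simp only [hΔdef, mul_sub, hmul]
    rw [show min m (k+1) = m by omega, show min m k = m by omega]
    abel
  have hQΔ : ∀ k, Q' (k + 1) * Δ k = Δ k := by
    intro k
    simp only [hΔdef, mul_sub, hmul]
    rw [min_self, show min (k+1) k = k by omega]
  have hΔQ : ∀ k, Δ k * Q' (k + 1) = Δ k := by
    intro k
    simp only [hΔdef, sub_mul, hmul]
    rw [min_self, show min k (k+1) = k by omega]
  -- block-diagonal compressions lie in the nest algebra
  have hdiag : ∀ x : Matrix (Fin n) (Fin n) ℂ,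
      (∑ k ∈ Finset.range r, Δ k * x * Δ k) ∈ nestAlgebra Q := by
    intro x i
    rw [← hQ'i i, Finset.mul_sum, Finset.sum_mul]
    refine Finset.sum_eq_zero fun k hk => ?_
    rcases lt_or_ge k (i : ℕ) with h | h
    · have h0 : (1 - Q' (i : ℕ)) * (Δ k * x * Δ k) = 0 := by
        rw [show (1 - Q' (i:ℕ)) * (Δ k * x * Δ k) = ((1 - Q' (i:ℕ)) * Δ k) * (x * Δ k) by
          noncomm_ring, hl _ _ h, zero_mul]
      rw [h0, zero_mul]
    · rw [mul_assoc, mul_assoc, hrz _ _ h]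
      simp
  set b : Matrix (Fin n) (Fin n) ℂ := ∑ k ∈ Finset.range r, Δ k * a * Δ k with hbdef
  have hb1 : b ∈ nestAlgebra Q := hdiag a
  have hb2 : bᴴ ∈ nestAlgebra Q := by
    have h : bᴴ = ∑ k ∈ Finset.range r, Δ k * aᴴ * Δ k := by
      simp [hbdef, conjTranspose_sum, conjTranspose_mul, hΔherm, mul_assoc]
    rw [h]; exact hdiag aᴴ
  refine ⟨b, hb1, hb2, ?_⟩
  -- decompose a - b as the sum of the off-diagonal blocks
  have ha : a = ∑ j ∈ Finset.range r, ∑ k ∈ Finset.range r, Δ j * a * Δ k := by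
    calc a = (∑ j ∈ Finset.range r, Δ j) * a * (∑ k ∈ Finset.range r, Δ k) := by
          rw [hΔsum, one_mul, mul_one]
      _ = (∑ j ∈ Finset.range r, Δ j * a) * (∑ k ∈ Finset.range r, Δ k) := by
          rw [Finset.sum_mul]
      _ = ∑ j ∈ Finset.range r, ∑ k ∈ Finset.range r, Δ j * a * Δ k :=
          Finset.sum_mul_sum _ _ _ _
  have hab : a - b = ∑ j ∈ Finset.range r, ∑ k ∈ (Finset.range r).erase j,
      Δ j * a * Δ k := by
    conv_lhs => rw [ha]
    rw [hbdef, ← Finset.sum_sub_distrib]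
    refine Finset.sum_congr rfl fun j hj => ?_
    rw [Finset.sum_erase_eq_sub hj]
  -- per-term bound
  have hmid : ∀ (u v w : Matrix (Fin n) (Fin n) ℂ), ‖u‖ ≤ 1 → ‖v‖ ≤ ε → ‖w‖ ≤ 1 →
      ‖u * v * w‖ ≤ ε := by
    intro u v w hu hv hw
    calc ‖u * v * w‖ ≤ ‖u * v‖ * ‖w‖ := norm_mul_le _ _
      _ ≤ ‖u‖ * ‖v‖ * ‖w‖ := by gcongr; exact norm_mul_le _ _
      _ ≤ 1 * ε * 1 := by
          gcongr
      _ = ε := by ring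
  have hterm : ∀ j ∈ Finset.range r, ∀ k ∈ (Finset.range r).erase j,
      ‖Δ j * a * Δ k‖ ≤ ε := by
    intro j hj k hk
    have hjk : k ≠ j := Finset.ne_of_mem_erase hk
    have hkr : k < r := Finset.mem_range.mp (Finset.mem_of_mem_erase hk)
    have hjr : j < r := Finset.mem_range.mp hj
    rcases lt_or_gt_of_ne hjk with h | h
    · -- k < j : lower triangular term
      have e1 : Δ j * (1 - Q' (k + 1)) = Δ j := by
        rw [mul_sub, mul_one, hrz (k+1) j (by omega), sub_zero]
      have e2 : Q' (k + 1) * Δ k = Δ k := hQΔ k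
      have heq : Δ j * a * Δ k = Δ j * ((1 - Q' (k + 1)) * a * Q' (k + 1)) * Δ k := by
        conv_lhs => rw [← e1, ← e2]
        noncomm_ring
      rw [heq]
      refine hmid _ _ _ (hΔn1 j) ?_ (hΔn1 k)
      have := hkey a haP hnorm ⟨k + 1, by omega⟩
      rwa [← hQ'i ⟨k + 1, by omega⟩] at this
    · -- j < k : upper triangular term
      have e1 : Δ j * Q' (j + 1) = Δ j := hΔQ j
      have e2 : (1 - Q' (j + 1)) * Δ k = Δ k := by
        rw [sub_mul, one_mul, hQz (j+1) k (by omega), sub_zero]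
      have heq : Δ j * a * Δ k = Δ j * (Q' (j + 1) * a * (1 - Q' (j + 1))) * Δ k := by
        conv_lhs => rw [← e1, ← e2]
        noncomm_ring
      rw [heq]
      refine hmid _ _ _ (hΔn1 j) ?_ (hΔn1 k)
      have hmnorm : ‖Q' (j + 1) * a * (1 - Q' (j + 1))‖
          = ‖(1 - Q' (j + 1)) * aᴴ * Q' (j + 1)‖ := by
        rw [← Matrix.l2_opNorm_conjTranspose (Q' (j + 1) * a * (1 - Q' (j + 1)))]
        congr 1
        simp [conjTranspose_mul, hQ'herm, mul_assoc]
      rw [hmnorm]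
      have hnorm' : ‖aᴴ‖ ≤ 1 := by rw [Matrix.l2_opNorm_conjTranspose]; exact hnorm
      have := hkey aᴴ haPs hnorm' ⟨j + 1, by omega⟩
      rwa [← hQ'i ⟨j + 1, by omega⟩] at this
  -- sum it up
  have h1 : ‖a - b‖ ≤ ∑ j ∈ Finset.range r, ∑ k ∈ (Finset.range r).erase j, ε := by
    rw [hab]
    refine (norm_sum_le _ _).trans (Finset.sum_le_sum fun j hj => ?_)
    exact (norm_sum_le _ _).trans (Finset.sum_le_sum fun k hk => hterm j hj k hk)
  have h2 : (∑ j ∈ Finset.range r, ∑ k ∈ (Finset.range r).erase j, ε)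
      ≤ (r : ℝ) ^ 2 * ε := by
    have hc : ∀ j ∈ Finset.range r, (∑ _k ∈ (Finset.range r).erase j, ε)
        = ((r - 1 : ℕ) : ℝ) * ε := by
      intro j hj
      rw [Finset.sum_const, Finset.card_erase_of_mem hj, Finset.card_range, nsmul_eq_mul]
    rw [Finset.sum_congr rfl hc, Finset.sum_const, Finset.card_range, nsmul_eq_mul]
    have : ((r : ℝ)) * (((r - 1 : ℕ) : ℝ) * ε) = ((r * (r - 1) : ℕ) : ℝ) * ε := by
      push_cast
      ring
    rw [this]
    have hle : ((r * (r - 1) : ℕ) : ℝ) ≤ (r : ℝ) ^ 2 := by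
      have : r * (r - 1) ≤ r ^ 2 := by
        calc r * (r - 1) ≤ r * r := Nat.mul_le_mul_left r (Nat.sub_le r 1)
          _ = r ^ 2 := (sq r).symm
      exact_mod_cast this
    exact mul_le_mul_of_nonneg_right hle (le_of_lt hεpos)
  have h3 : (r : ℝ) ^ 2 * ε < η := by
    rw [hε]
    calc (r : ℝ) ^ 2 * (η / ((r : ℝ) ^ 2 + 1))
        < ((r : ℝ) ^ 2 + 1) * (η / ((r : ℝ) ^ 2 + 1)) := by
          refine mul_lt_mul_of_pos_right (lt_add_one _) (by positivity)
      _ = η := by field_simp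
  linarith
end

section
/- Let (A₁, C₁) and (A₂, C₂) be digraph subalgebras of (M_n(ℂ), D_n), and let 0 < ε < 1/4. If A₁ ⊆_ε A₂, then C₁ ⊆ C₂. -/
open scoped Matrix.Norms.L2Operator
open Matrix

/-- A digraph subalgebra of `(Mₙ(ℂ), Dₙ)`: a matrix unit system
`{v_{kl} : (k,l) ∈ S} ⊆ Mₙ(ℂ)` indexed by a reflexive transitive relation `S`
on `{1,…,m}`, each `v_{kl}` a `Dₙ`-normalising partial isometry, with the usual
matrix unit relations, whose diagonal units are mutually orthogonal projections
in the diagonal masa `Dₙ`. -/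
structure DigraphSubalgebra (n m : ℕ) where
  /-- the underlying reflexive transitive relation (digraph) on `{1,…,m}` -/
  S : Fin m → Fin m → Prop
  refl : ∀ k, S k k
  trans : ∀ k l j, S k l → S l j → S k j
  /-- the matrix units `v_{kl}` (only those with `(k,l) ∈ S` are relevant) -/
  u : Fin m → Fin m → Matrix (Fin n) (Fin n) ℂ
  partial_isometry : ∀ k l, S k l →
    ((u k l)ᴴ * u k l) * ((u k l)ᴴ * u k l) = (u k l)ᴴ * u k l
  normalises_left : ∀ k l, S k l → ∀ c : Matrix (Fin n) (Fin n) ℂ, c.IsDiag →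
    (u k l * c * (u k l)ᴴ).IsDiag
  normalises_right : ∀ k l, S k l → ∀ c : Matrix (Fin n) (Fin n) ℂ, c.IsDiag →
    ((u k l)ᴴ * c * u k l).IsDiag
  star_eq : ∀ k l, S k l → S l k → (u k l)ᴴ = u l k
  conj_left : ∀ k l, S k l → (u k l)ᴴ * u k l = u l l
  conj_right : ∀ k l, S k l → u k l * (u k l)ᴴ = u k k
  mul_eq : ∀ k l l'', S k l → S l l'' → u k l * u l l'' = u k l''
  mul_eq_zero : ∀ k l l' l'', S k l → S l' l'' → l ≠ l' → u k l * u l' l'' = 0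
  diag_isDiag : ∀ k, (u k k).IsDiag
  diag_proj : ∀ k, u k k * u k k = u k k ∧ (u k k)ᴴ = u k k
  diag_ortho : ∀ k l, k ≠ l → u k k * u l l = 0

namespace DigraphSubalgebra

variable {n m : ℕ}

/-- The digraph algebra `A' = span{v_{kl} : (k,l) ∈ S}`. -/
def A (D : DigraphSubalgebra n m) : Set (Matrix (Fin n) (Fin n) ℂ) :=
  (Submodule.span ℂ {x | ∃ k l, D.S k l ∧ x = D.u k l} : Submodule ℂ _)

/-- The masa `C' = span{v_{11},…,v_{mm}} ⊆ Dₙ`. -/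
def C (D : DigraphSubalgebra n m) : Set (Matrix (Fin n) (Fin n) ℂ) :=
  (Submodule.span ℂ (Set.range fun k => D.u k k) : Submodule ℂ _)

/-- The normaliser `N_{C'}(A')`: partial isometries `w ∈ A'` with
`w c w* ∈ C'` and `w* c w ∈ C'` for all `c ∈ C'`. -/
def N (D : DigraphSubalgebra n m) : Set (Matrix (Fin n) (Fin n) ℂ) :=
  {w | w ∈ D.A ∧ (wᴴ * w) * (wᴴ * w) = wᴴ * w ∧
    ∀ c ∈ D.C, w * c * wᴴ ∈ D.C ∧ wᴴ * c * w ∈ D.C}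

end DigraphSubalgebra

section Aux

open scoped Classical

variable {n : ℕ}

/-- Every entry of a matrix is bounded by its `ℓ²→ℓ²` operator norm. -/
lemma entry_norm_le_l2_opNorm (M : Matrix (Fin n) (Fin n) ℂ) (i j : Fin n) :
    ‖M i j‖ ≤ ‖M‖ := by
  classical
  set x : EuclideanSpace ℂ (Fin n) := (EuclideanSpace.equiv (Fin n) ℂ).symm (Pi.single j 1)
  have hx : ‖x‖ = 1 := by
    simpa [x] using EuclideanSpace.norm_single (𝕜 := ℂ) j 1
  have h1 := M.l2_opNorm_mulVec x
  rw [hx, mul_one] at h1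
  refine le_trans ?_ h1
  set y : EuclideanSpace ℂ (Fin n) := (EuclideanSpace.equiv (Fin n) ℂ).symm (M *ᵥ x)
  have hy : y i = M i j := by
    show (M *ᵥ (Pi.single j 1 : Fin n → ℂ)) i = M i j
    rw [Matrix.mulVec_single]
    exact mul_one _
  rw [← hy, EuclideanSpace.norm_eq]
  have : ‖y i‖ = Real.sqrt (‖y i‖ ^ 2) := (Real.sqrt_sq (norm_nonneg _)).symm
  rw [this]
  apply Real.sqrt_le_sqrt
  exact Finset.single_le_sum (f := fun i => ‖y i‖ ^ 2) (fun _ _ => by positivity)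
    (Finset.mem_univ i)

/-- Diagonal entries of a diagonal idempotent are `0` or `1`. -/
lemma diag_idem_entry (p : Matrix (Fin n) (Fin n) ℂ) (hd : p.IsDiag)
    (hp : p * p = p) (i : Fin n) : p i i = 0 ∨ p i i = 1 := by
  have h1 : (p * p) i i = p i i := by rw [hp]
  rw [Matrix.mul_apply] at h1
  rw [Finset.sum_eq_single i (fun j _ hj => by rw [hd hj.symm, zero_mul])
    (fun hi => absurd (Finset.mem_univ i) hi)] at h1
  have h2 : p i i * (p i i - 1) = 0 := by
    rw [mul_sub, mul_one, h1, sub_self]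
  rcases mul_eq_zero.mp h2 with h | h
  · exact Or.inl h
  · exact Or.inr (by linear_combination h)

/-- A diagonal collapse for products with a diagonal matrix on the left. -/
lemma mul_isDiag_apply_left (d M : Matrix (Fin n) (Fin n) ℂ) (hd : d.IsDiag) (i : Fin n) :
    (d * M) i i = d i i * M i i := by
  rw [Matrix.mul_apply]
  exact Finset.sum_eq_single i (fun j _ hj => by rw [hd hj.symm, zero_mul])
    (fun hi => absurd (Finset.mem_univ i) hi)

/-- A diagonal collapse for products with a diagonal matrix on the right. -/
lemma mul_isDiag_apply_right (M d : Matrix (Fin n) (Fin n) ℂ) (hd : d.IsDiag) (i : Fin n) :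
    (M * d) i i = M i i * d i i := by
  rw [Matrix.mul_apply]
  exact Finset.sum_eq_single i (fun j _ hj => by rw [hd hj, mul_zero])
    (fun hi => absurd (Finset.mem_univ i) hi)

/-- A hermitian idempotent has norm at most one. -/
lemma proj_norm_le_one_s12 (p : Matrix (Fin n) (Fin n) ℂ) (h1 : p * p = p) (h2 : pᴴ = p) :
    ‖p‖ ≤ 1 := by
  have key : ‖p‖ * ‖p‖ = ‖p‖ := by
    rw [← Matrix.l2_opNorm_conjTranspose_mul_self p, h2, h1]
  nlinarith [norm_nonneg p]

end Aux

/-- Let `(A₁, C₁)` and `(A₂, C₂)` be digraph subalgebras of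
`(Mₙ(ℂ), Dₙ)` and let `0 < ε < 1/4`.  If `A₁ ⊆_ε A₂` then `C₁ ⊆ C₂`. -/
theorem stmt_12 (n m₁ m₂ : ℕ) (hm₁ : 1 ≤ m₁) (hm₂ : 1 ≤ m₂)
    (D₁ : DigraphSubalgebra n m₁) (D₂ : DigraphSubalgebra n m₂)
    (ε : ℝ) (hε0 : 0 < ε) (hε : ε < 1 / 4)
    (h : ∀ a ∈ D₁.A, ‖a‖ ≤ 1 → ∃ b ∈ D₂.A, ‖a - b‖ < ε) :
    D₁.C ⊆ D₂.C := by
  classical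
  -- the "conditional expectation" onto the diagonal, as a linear map
  let E : Matrix (Fin n) (Fin n) ℂ →ₗ[ℂ] Matrix (Fin n) (Fin n) ℂ :=
    { toFun := fun M => Matrix.diagonal M.diag
      map_add' := fun M N => by
        ext i j
        by_cases hij : i = j <;> simp [Matrix.diagonal_apply, hij, Matrix.diag]
      map_smul' := fun c M => by
        ext i j
        by_cases hij : i = j <;> simp [Matrix.diagonal_apply, hij, Matrix.diag] }
  set C₂ : Submodule ℂ (Matrix (Fin n) (Fin n) ℂ) :=
    Submodule.span ℂ (Set.range fun k => D₂.u k k) with hC₂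
  -- E maps A₂ into C₂
  have hE : ∀ b ∈ D₂.A, E b ∈ C₂ := by
    intro b hb
    have hspan : Submodule.span ℂ {x | ∃ k l, D₂.S k l ∧ x = D₂.u k l} ≤
        Submodule.comap E C₂ := by
      rw [Submodule.span_le]
      rintro x ⟨k, l, hkl, rfl⟩
      simp only [SetLike.mem_coe, Submodule.mem_comap]
      by_cases hkeq : k = l
      · subst hkeq
        have : E (D₂.u k k) = D₂.u k k := (D₂.diag_isDiag k).diagonal_diag
        rw [this]
        exact Submodule.subset_span ⟨k, rfl⟩
      · -- off-diagonal matrix units have zero diagonal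
        have hzero : E (D₂.u k l) = 0 := by
          have hleft : D₂.u k k * D₂.u k l = D₂.u k l := D₂.mul_eq k k l (D₂.refl k) hkl
          have hright : D₂.u k l * D₂.u l l = D₂.u k l := D₂.mul_eq k l l hkl (D₂.refl l)
          have hortho : D₂.u k k * D₂.u l l = 0 := D₂.diag_ortho k l hkeq
          have hdiag : ∀ i, D₂.u k l i i = 0 := by
            intro i
            have e1 : D₂.u k l i i = D₂.u k k i i * (D₂.u k l i i * D₂.u l l i i) := by
              conv_lhs => rw [← hleft]
              rw [mul_isDiag_apply_left _ _ (D₂.diag_isDiag k) i]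
              congr 1
              conv_lhs => rw [← hright]
              exact mul_isDiag_apply_right _ _ (D₂.diag_isDiag l) i
            have e2 : D₂.u k k i i * D₂.u l l i i = 0 := by
              have h4 := mul_isDiag_apply_right (D₂.u k k) (D₂.u l l) (D₂.diag_isDiag l) i
              rw [hortho] at h4
              simpa using h4.symm
            calc D₂.u k l i i = D₂.u k k i i * (D₂.u k l i i * D₂.u l l i i) := e1
              _ = D₂.u k k i i * D₂.u l l i i * D₂.u k l i i := by ring
              _ = 0 := by rw [e2, zero_mul]
          ext i j
          by_cases hij : i = j
          · subst hij
            simp [E, Matrix.diagonal_apply, Matrix.diag, hdiag i]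
          · simp [E, Matrix.diagonal_apply, hij]
        rw [hzero]
        exact Submodule.zero_mem _
    exact hspan hb
  -- it suffices to show each generator of C₁ lies in C₂
  have main : ∀ k, D₁.u k k ∈ C₂ := by
    intro k
    set p : Matrix (Fin n) (Fin n) ℂ := D₁.u k k with hp
    have hpd : p.IsDiag := D₁.diag_isDiag k
    have hpp : p * p = p := (D₁.diag_proj k).1
    have hph : pᴴ = p := (D₁.diag_proj k).2
    have hp01 : ∀ i, p i i = 0 ∨ p i i = 1 := diag_idem_entry p hpd hpp
    have hpA : p ∈ D₁.A :=
      Submodule.subset_span ⟨k, k, D₁.refl k, rfl⟩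
    obtain ⟨b, hbA, hbnorm⟩ := h p hpA (proj_norm_le_one_s12 p hpp hph)
    have hEb : E b ∈ C₂ := hE b hbA
    rw [hC₂, Submodule.mem_span_range_iff_exists_fun] at hEb
    obtain ⟨lam, hlam⟩ := hEb
    -- diagonal entries of q's
    set q : Fin m₂ → Matrix (Fin n) (Fin n) ℂ := fun l => D₂.u l l with hq
    have hqd : ∀ l, (q l).IsDiag := fun l => D₂.diag_isDiag l
    have hq01 : ∀ l i, q l i i = 0 ∨ q l i i = 1 :=
      fun l => diag_idem_entry (q l) (hqd l) (D₂.diag_proj l).1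
    have hqortho : ∀ l l', l ≠ l' → ∀ i, q l i i * q l' i i = 0 := by
      intro l l' hll i
      have := mul_isDiag_apply_right (q l) (q l') (hqd l') i
      rw [D₂.diag_ortho l l' hll] at this
      exact this.symm
    -- entrywise values of E b
    have hcval : ∀ i, b i i = ∑ l, lam l * q l i i := by
      intro i
      have h1 : (∑ l, lam l • q l) i i = E b i i := by rw [hlam]
      have h2 : E b i i = b i i := by simp [E, Matrix.diagonal_apply, Matrix.diag]
      rw [← h2, ← h1]
      rw [Matrix.sum_apply]
      simp [Matrix.smul_apply]
    -- entrywise estimate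
    have hest : ∀ i, ‖p i i - b i i‖ < 1 / 4 := by
      intro i
      have : ‖(p - b) i i‖ ≤ ‖p - b‖ := entry_norm_le_l2_opNorm _ i i
      have h3 : (p - b) i i = p i i - b i i := rfl
      rw [h3] at this
      linarith
    -- the coefficients for p in terms of the q's
    set mu : Fin m₂ → ℂ := fun l => if ∃ j, q l j j = 1 ∧ p j j = 1 then 1 else 0 with hmu
    have key : p = ∑ l, mu l • q l := by
      ext i j
      rcases eq_or_ne i j with rfl | hij
      · -- diagonal entry
        rw [Matrix.sum_apply]
        simp only [Matrix.smul_apply, smul_eq_mul]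
        by_cases hcase : ∃ l₀, q l₀ i i = 1
        · obtain ⟨l₀, hl₀⟩ := hcase
          have huniq : ∀ l, l ≠ l₀ → q l i i = 0 := by
            intro l hl
            have := hqortho l l₀ hl i
            rw [hl₀, mul_one] at this
            exact this
          have hsum : ∑ l, mu l * q l i i = mu l₀ := by
            rw [Finset.sum_eq_single l₀ (fun l _ hl => by rw [huniq l hl, mul_zero])
              (fun hi => absurd (Finset.mem_univ l₀) hi), hl₀, mul_one]
          rw [hsum]
          have hcvi : b i i = lam l₀ := by
            rw [hcval i, Finset.sum_eq_single l₀ (fun l _ hl => by rw [huniq l hl, mul_zero])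
              (fun hi => absurd (Finset.mem_univ l₀) hi), hl₀, mul_one]
          rcases hp01 i with hpi | hpi
          · -- p i i = 0 : show mu l₀ = 0
            rw [hpi]
            symm
            have hmu0 : mu l₀ = if ∃ j, q l₀ j j = 1 ∧ p j j = 1 then (1:ℂ) else 0 := rfl
            rw [hmu0, if_neg]
            rintro ⟨j', hqj', hpj'⟩
            have huniqj : ∀ l, l ≠ l₀ → q l j' j' = 0 := by
              intro l hl
              have := hqortho l l₀ hl j'
              rw [hqj', mul_one] at this
              exact this
            have hcvj : b j' j' = lam l₀ := by
              rw [hcval j', Finset.sum_eq_single l₀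
                (fun l _ hl => by rw [huniqj l hl, mul_zero])
                (fun hi => absurd (Finset.mem_univ l₀) hi), hqj', mul_one]
            have e1 : ‖(0 : ℂ) - lam l₀‖ < 1 / 4 := by
              have := hest i; rwa [hpi, hcvi] at this
            have e2 : ‖(1 : ℂ) - lam l₀‖ < 1 / 4 := by
              have := hest j'; rwa [hpj', hcvj] at this
            have : (1 : ℝ) = ‖((1 : ℂ) - lam l₀) - ((0 : ℂ) - lam l₀)‖ := by
              norm_num
            have htri := norm_sub_le ((1 : ℂ) - lam l₀) ((0 : ℂ) - lam l₀)
            rw [← this] at htri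
            linarith
          · -- p i i = 1 : show mu l₀ = 1
            rw [hpi]
            symm
            have hmu1 : mu l₀ = if ∃ j, q l₀ j j = 1 ∧ p j j = 1 then (1:ℂ) else 0 := rfl
            rw [hmu1, if_pos ⟨i, hl₀, hpi⟩]
        · -- all q l i i = 0
          push_neg at hcase
          have hq0 : ∀ l, q l i i = 0 := by
            intro l
            rcases hq01 l i with h0 | h1
            · exact h0
            · exact absurd h1 (hcase l)
          have hsum : ∑ l, mu l * q l i i = 0 := by
            apply Finset.sum_eq_zero
            intro l _
            rw [hq0 l, mul_zero]
          rw [hsum]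
          have hcvi : b i i = 0 := by
            rw [hcval i]
            apply Finset.sum_eq_zero
            intro l _
            rw [hq0 l, mul_zero]
          rcases hp01 i with hpi | hpi
          · exact hpi
          · exfalso
            have := hest i
            rw [hpi, hcvi, sub_zero] at this
            norm_num at this
      · -- off-diagonal entry
        rw [Matrix.sum_apply]
        simp only [Matrix.smul_apply, smul_eq_mul]
        rw [hpd hij]
        symm
        apply Finset.sum_eq_zero
        intro l _
        rw [hqd l hij, mul_zero]
    rw [key]
    exact Submodule.sum_mem _ fun l _ =>
      Submodule.smul_mem _ _ (Submodule.subset_span ⟨l, rfl⟩)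
  -- conclude
  intro x hx
  have : Submodule.span ℂ (Set.range fun k => D₁.u k k) ≤ C₂ := by
    rw [Submodule.span_le]
    rintro y ⟨k, rfl⟩
    exact main k
  exact this hx
end

section
/- Let w ∈ M_n(ℂ) with ‖w‖ ≤ 1 and ‖w*w − (w*w)²‖ ≤ ε. Then ‖w w* w − w‖ ≤ √(2ε). -/
open scoped Matrix.Norms.L2Operator
open Matrix

/-- If `w ∈ Mₙ(ℂ)` has `‖w‖ ≤ 1` and `‖w*w − (w*w)²‖ ≤ ε`,
then `‖w w* w − w‖ ≤ √(2ε)`. -/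
theorem stmt_16 (n : ℕ) (ε : ℝ) (w : Matrix (Fin n) (Fin n) ℂ)
    (hw : ‖w‖ ≤ 1) (h : ‖wᴴ * w - (wᴴ * w) * (wᴴ * w)‖ ≤ ε) :
    ‖w * wᴴ * w - w‖ ≤ Real.sqrt (2 * ε) := by
  set a : Matrix (Fin n) (Fin n) ℂ := wᴴ * w with ha
  set x : Matrix (Fin n) (Fin n) ℂ := w * wᴴ * w - w with hx
  have ha1 : ‖a‖ ≤ 1 := by
    calc ‖a‖ ≤ ‖wᴴ‖ * ‖w‖ := norm_mul_le _ _
    _ ≤ 1 * 1 := by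
        rw [Matrix.l2_opNorm_conjTranspose]
        exact mul_le_mul hw hw (norm_nonneg _) zero_le_one
    _ = 1 := one_mul 1
  have hε : 0 ≤ ε := le_trans (norm_nonneg _) h
  have key : xᴴ * x = (a - a * a) - a * (a - a * a) := by
    simp only [hx, ha, conjTranspose_sub, conjTranspose_mul, conjTranspose_conjTranspose]
    noncomm_ring
  have hnorm : ‖xᴴ * x‖ ≤ 2 * ε := by
    rw [key]
    calc ‖(a - a * a) - a * (a - a * a)‖ ≤ ‖a - a * a‖ + ‖a * (a - a * a)‖ := norm_sub_le _ _
    _ ≤ ε + ‖a‖ * ‖a - a * a‖ := by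
        gcongr
        exact norm_mul_le _ _
    _ ≤ ε + 1 * ε := by gcongr
    _ = 2 * ε := by ring
  have hsq : ‖x‖ * ‖x‖ ≤ 2 * ε := by
    rw [← Matrix.l2_opNorm_conjTranspose_mul_self x]; exact hnorm
  have := Real.sqrt_le_sqrt hsq
  rwa [Real.sqrt_mul_self (norm_nonneg x)] at this
end
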